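/- The series B_0 = −2G_2² + (5/6)G_4 satisfies B_0 = q·(d/dq)G_2, where G_2 = −1/24 + Σ_{n≥1} σ_1(n) q^n and G_4 = 1/240 + Σ_{n≥1} σ_3(n) q^n, with σ_k(n) = Σ_{d|n} d^k. -/

import Mathlib

open Finset
namespace S12
def Q (n : ℕ) : Finset ((ℕ×ℕ)×(ℕ×ℕ)) :=
  ((range (n+1) ×ˢ range (n+1)) ×ˢ (range (n+1) ×ˢ range (n+1))).filter
    fun p => 0 < p.1.1 ∧ 0 < p.1.2 ∧ 0 < p.2.1 ∧ 0 < p.2.2 ∧ p.1.1*p.1.2 + p.2.1*p.2.2 = n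
lemma mem_Q {n : ℕ} {p : (ℕ×ℕ)×(ℕ×ℕ)} :
    p ∈ Q n ↔ 0 < p.1.1 ∧ 0 < p.1.2 ∧ 0 < p.2.1 ∧ 0 < p.2.2 ∧ p.1.1*p.1.2 + p.2.1*p.2.2 = n := by
  obtain ⟨⟨a,x⟩,b,y⟩ := p
  simp only [Q, mem_filter, mem_product, mem_range]
  constructor
  · rintro ⟨-, h⟩; exact h
  · rintro ⟨ha, hx, hb, hy, h⟩
    refine ⟨⟨⟨?_, ?_⟩, ?_, ?_⟩, ha, hx, hb, hy, h⟩ <;> simp only [Nat.lt_succ_iff] <;> nlinarith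

lemma sum_swap' (n : ℕ) (P : ((ℕ×ℕ)×(ℕ×ℕ)) → Prop) [DecidablePred P] (F : ((ℕ×ℕ)×(ℕ×ℕ)) → ℚ) :
    ∑ p ∈ (Q n).filter P, F p = ∑ p ∈ (Q n).filter (fun p => P (p.2, p.1)), F (p.2, p.1) := by
  refine sum_nbij' (fun p => (p.2, p.1)) (fun p => (p.2, p.1)) ?_ ?_ ?_ ?_ ?_ <;>
    rintro ⟨⟨a,x⟩,b,y⟩ hp
  · simp only [mem_filter, mem_Q] at hp ⊢
    exact ⟨⟨hp.1.2.2.1, hp.1.2.2.2.1, hp.1.1, hp.1.2.1, by omega⟩, hp.2⟩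
  · simp only [mem_filter, mem_Q] at hp ⊢
    exact ⟨⟨hp.1.2.2.1, hp.1.2.2.2.1, hp.1.1, hp.1.2.1, by omega⟩, hp.2⟩
  · rfl
  · rfl
  · rfl

lemma sum_trichotomy (s : Finset ((ℕ×ℕ)×(ℕ×ℕ))) (u v : ((ℕ×ℕ)×(ℕ×ℕ)) → ℕ)
    (f : ((ℕ×ℕ)×(ℕ×ℕ)) → ℚ) :
    ∑ x ∈ s, f x = ∑ x ∈ s.filter (fun x => u x < v x), f x
      + ∑ x ∈ s.filter (fun x => v x < u x), f x + ∑ x ∈ s.filter (fun x => u x = v x), f x := by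
  rw [← sum_filter_add_sum_filter_not s (fun x => u x < v x) f, add_assoc]
  congr 1
  rw [← sum_filter_add_sum_filter_not (s.filter (fun x => ¬ u x < v x)) (fun x => v x < u x) f,
    filter_filter, filter_filter]
  congr 1
  · apply sum_congr _ (fun _ _ => rfl)
    apply filter_congr
    intro x _
    constructor <;> intro h <;> omega
  · apply sum_congr _ (fun _ _ => rfl)
    apply filter_congr
    intro x _
    constructor <;> intro h <;> omega

lemma sum_Ico_id (d : ℕ) : ∑ a ∈ Ico 1 d, (a:ℚ) = d*(d-1)/2 := by
  induction d with
  | zero => simp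
  | succ d ih =>
    rcases Nat.eq_zero_or_pos d with rfl | hd
    · norm_num
    · rw [sum_Ico_succ_top hd, ih]
      push_cast
      ring

lemma sum_Ico_sq (d : ℕ) : ∑ a ∈ Ico 1 d, (a:ℚ)^2 = d*(d-1)*(2*d-1)/6 := by
  induction d with
  | zero => simp
  | succ d ih =>
    rcases Nat.eq_zero_or_pos d with rfl | hd
    · norm_num
    · rw [sum_Ico_succ_top hd, ih]
      push_cast
      ring

lemma sum_Ico_const (d : ℕ) (hd : 1 ≤ d) (c : ℚ) : ∑ _a ∈ Ico 1 d, c = ((d:ℚ)-1)*c := by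
  rw [sum_const, Nat.card_Ico]
  rw [nsmul_eq_mul, Nat.cast_sub hd]
  norm_num
lemma sum_phi (n : ℕ) (F : ((ℕ×ℕ)×(ℕ×ℕ)) → ℚ) :
    ∑ p ∈ (Q n).filter (fun p => p.1.2 < p.2.2),
        F ((p.1.1 + p.2.1, p.1.2), (p.2.1, p.2.2 - p.1.2))
      = ∑ p ∈ (Q n).filter (fun p => p.2.1 < p.1.1), F p := by
  refine sum_nbij' (fun p => ((p.1.1 + p.2.1, p.1.2), (p.2.1, p.2.2 - p.1.2)))
    (fun p => ((p.1.1 - p.2.1, p.1.2), (p.2.1, p.2.2 + p.1.2))) ?_ ?_ ?_ ?_ ?_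
  · rintro ⟨⟨a,x⟩,b,y⟩ hp
    simp only [mem_filter, mem_Q] at hp ⊢
    obtain ⟨⟨ha, hx, hb, hy, h⟩, hxy⟩ := hp
    refine ⟨⟨by omega, hx, hb, by omega, ?_⟩, by omega⟩
    have hle : x ≤ y := le_of_lt hxy
    have : (a+b)*x + b*(y-x) = a*x + b*(x + (y-x)) := by
      ring
    rw [this, Nat.add_sub_cancel' hle]; exact h
  · rintro ⟨⟨a,x⟩,b,y⟩ hp
    simp only [mem_filter, mem_Q] at hp ⊢
    obtain ⟨⟨ha, hx, hb, hy, h⟩, hba⟩ := hp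
    have hba' : b ≤ a := le_of_lt hba
    refine ⟨⟨by omega, hx, hb, by omega, ?_⟩, by omega⟩
    have : (a-b)*x + b*(y+x) = ((a-b)+b)*x + b*y := by
      ring
    rw [this, Nat.sub_add_cancel hba']; exact h
  · rintro ⟨⟨a,x⟩,b,y⟩ hp
    simp only [mem_filter, mem_Q] at hp
    obtain ⟨⟨ha, hx, hb, hy, h⟩, hxy⟩ := hp
    have h1 : a + b - b = a := by omega
    have h2 : y - x + x = y := by omega
    simp [h1, h2]
  · rintro ⟨⟨a,x⟩,b,y⟩ hp
    simp only [mem_filter, mem_Q] at hp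
    obtain ⟨⟨ha, hx, hb, hy, h⟩, hba⟩ := hp
    have h1 : a - b + b = a := by omega
    have h2 : y + x - x = y := by omega
    simp [h1, h2]
  · intro p _; rfl
/-- diagonal `x = y`: parametrized by `(d,x)` with `d*x = n`, `d = a+b`, `a ∈ [1,d)`. -/
lemma sum_diag_xy (n : ℕ) (F : ((ℕ×ℕ)×(ℕ×ℕ)) → ℚ) :
    ∑ p ∈ (Q n).filter (fun p => p.1.2 = p.2.2), F p
      = ∑ q ∈ n.divisorsAntidiagonal, ∑ a ∈ Ico 1 q.1, F ((a, q.2), (q.1 - a, q.2)) := by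
  rw [show (∑ q ∈ n.divisorsAntidiagonal, ∑ a ∈ Ico 1 q.1, F ((a, q.2), (q.1 - a, q.2)))
      = ∑ s ∈ (n.divisorsAntidiagonal).sigma (fun q => Ico 1 q.1),
          F ((s.2, s.1.2), (s.1.1 - s.2, s.1.2)) from
    (sum_sigma n.divisorsAntidiagonal (fun q => Ico 1 q.1)
      (fun s => F ((s.2, s.1.2), (s.1.1 - s.2, s.1.2)))).symm]
  symm
  refine sum_nbij' (fun s => ((s.2, s.1.2), (s.1.1 - s.2, s.1.2)))
    (fun p => (⟨(p.1.1 + p.2.1, p.1.2), p.1.1⟩ : Σ _ : ℕ×ℕ, ℕ)) ?_ ?_ ?_ ?_ ?_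
  · rintro ⟨⟨d,x⟩,a⟩ hs
    simp only [mem_sigma, Nat.mem_divisorsAntidiagonal, mem_Ico] at hs
    obtain ⟨⟨hdx, hn⟩, ha1, had⟩ := hs
    simp only [mem_filter, mem_Q]
    have hx : x ≠ 0 ∧ d ≠ 0 := by
      constructor <;> rintro rfl <;> simp at hdx <;> exact hn hdx.symm
    refine ⟨⟨by omega, by omega, by omega, by omega, ?_⟩, trivial⟩
    calc a*x + (d-a)*x = (a + (d-a))*x := by rw [Nat.add_mul]
      _ = d*x := by congr 1; omega
      _ = n := hdx
  · rintro ⟨⟨a,x⟩,b,y⟩ hp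
    simp only [mem_filter, mem_Q] at hp
    obtain ⟨⟨ha, hx, hb, hy, h⟩, hxy⟩ := hp
    simp only [mem_sigma, Nat.mem_divisorsAntidiagonal, mem_Ico]
    subst hxy
    refine ⟨⟨by rw [Nat.add_mul]; exact h, by rw [← h]; positivity⟩, by omega, by omega⟩
  · rintro ⟨⟨d,x⟩,a⟩ hs
    simp only [mem_sigma, Nat.mem_divisorsAntidiagonal, mem_Ico] at hs
    obtain ⟨⟨hdx, hn⟩, ha1, had⟩ := hs
    have h : a + (d - a) = d := by omega
    exact congrArg (fun t => (⟨(t, x), a⟩ : Σ _ : ℕ×ℕ, ℕ)) h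
  · rintro ⟨⟨a,x⟩,b,y⟩ hp
    simp only [mem_filter, mem_Q] at hp
    obtain ⟨⟨ha, hx, hb, hy, h⟩, hxy⟩ := hp
    have h1 : a + b - a = b := by omega
    show ((a, x), (a + b - a, x)) = ((a, x), (b, y))
    rw [h1, hxy]
  · rintro s _; rfl

/-- diagonal `a = b`: parametrized by `(a,d)` with `a*d = n`, `d = x+y`, `x ∈ [1,d)`. -/
lemma sum_diag_ab (n : ℕ) (F : ((ℕ×ℕ)×(ℕ×ℕ)) → ℚ) :
    ∑ p ∈ (Q n).filter (fun p => p.1.1 = p.2.1), F p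
      = ∑ q ∈ n.divisorsAntidiagonal, ∑ x ∈ Ico 1 q.2, F ((q.1, x), (q.1, q.2 - x)) := by
  rw [show (∑ q ∈ n.divisorsAntidiagonal, ∑ x ∈ Ico 1 q.2, F ((q.1, x), (q.1, q.2 - x)))
      = ∑ s ∈ (n.divisorsAntidiagonal).sigma (fun q => Ico 1 q.2),
          F ((s.1.1, s.2), (s.1.1, s.1.2 - s.2)) from
    (sum_sigma n.divisorsAntidiagonal (fun q => Ico 1 q.2)
      (fun s => F ((s.1.1, s.2), (s.1.1, s.1.2 - s.2)))).symm]
  symm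
  refine sum_nbij' (fun s => ((s.1.1, s.2), (s.1.1, s.1.2 - s.2)))
    (fun p => (⟨(p.1.1, p.1.2 + p.2.2), p.1.2⟩ : Σ _ : ℕ×ℕ, ℕ)) ?_ ?_ ?_ ?_ ?_
  · rintro ⟨⟨a,d⟩,x⟩ hs
    simp only [mem_sigma, Nat.mem_divisorsAntidiagonal, mem_Ico] at hs
    obtain ⟨⟨hdx, hn⟩, hx1, hxd⟩ := hs
    simp only [mem_filter, mem_Q]
    have hx : a ≠ 0 ∧ d ≠ 0 := by
      constructor <;> rintro rfl <;> simp at hdx <;> exact hn hdx.symm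
    refine ⟨⟨by omega, by omega, by omega, by omega, ?_⟩, trivial⟩
    calc a*x + a*(d-x) = a*(x + (d-x)) := by rw [Nat.mul_add]
      _ = a*d := by congr 1; omega
      _ = n := hdx
  · rintro ⟨⟨a,x⟩,b,y⟩ hp
    simp only [mem_filter, mem_Q] at hp
    obtain ⟨⟨ha, hx, hb, hy, h⟩, hab⟩ := hp
    simp only [mem_sigma, Nat.mem_divisorsAntidiagonal, mem_Ico]
    subst hab
    refine ⟨⟨by rw [Nat.mul_add]; exact h, by rw [← h]; positivity⟩, by omega, by omega⟩
  · rintro ⟨⟨a,d⟩,x⟩ hs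
    simp only [mem_sigma, Nat.mem_divisorsAntidiagonal, mem_Ico] at hs
    obtain ⟨⟨hdx, hn⟩, hx1, hxd⟩ := hs
    have h : x + (d - x) = d := by omega
    exact congrArg (fun t => (⟨(a, t), x⟩ : Σ _ : ℕ×ℕ, ℕ)) h
  · rintro ⟨⟨a,x⟩,b,y⟩ hp
    simp only [mem_filter, mem_Q] at hp
    obtain ⟨⟨ha, hx, hb, hy, h⟩, hab⟩ := hp
    have h1 : x + y - x = y := by omega
    show ((a, x), (a, x + y - x)) = ((a, x), (b, y))
    rw [h1, hab]
  · rintro s _; rfl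

/-- convolution: `∑_{Q n} a·b = ∑_{k+l=n} σ₁(k)σ₁(l)` -/
lemma sum_conv (n : ℕ) :
    ∑ p ∈ Q n, (p.1.1 : ℚ) * p.2.1
      = ∑ kl ∈ antidiagonal n,
          (ArithmeticFunction.sigma 1 kl.1 : ℚ) * (ArithmeticFunction.sigma 1 kl.2 : ℚ) := by
  have hσ : ∀ k : ℕ, (ArithmeticFunction.sigma 1 k : ℚ) = ∑ q ∈ k.divisorsAntidiagonal, (q.1 : ℚ) := by
    intro k
    rw [ArithmeticFunction.sigma_one_apply, Nat.sum_divisorsAntidiagonal (fun a x => (a:ℚ))]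
    push_cast
    rfl
  calc ∑ p ∈ Q n, (p.1.1 : ℚ) * p.2.1
      = ∑ s ∈ (antidiagonal n).sigma
          (fun kl => kl.1.divisorsAntidiagonal ×ˢ kl.2.divisorsAntidiagonal),
          (s.2.1.1 : ℚ) * s.2.2.1 := by
        refine sum_nbij' (fun p => (⟨(p.1.1*p.1.2, p.2.1*p.2.2), p⟩ : Σ _ : ℕ×ℕ, (ℕ×ℕ)×(ℕ×ℕ)))
          (fun s => s.2) ?_ ?_ ?_ ?_ ?_
        · rintro ⟨⟨a,x⟩,b,y⟩ hp
          rw [mem_Q] at hp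
          obtain ⟨ha, hx, hb, hy, h⟩ := hp
          simp only [mem_sigma, Finset.HasAntidiagonal.mem_antidiagonal, mem_product, Nat.mem_divisorsAntidiagonal]
          exact ⟨h, ⟨trivial, by positivity⟩, ⟨trivial, by positivity⟩⟩
        · rintro ⟨⟨k,l⟩,⟨a,x⟩,b,y⟩ hs
          simp only [mem_sigma, Finset.HasAntidiagonal.mem_antidiagonal, mem_product, Nat.mem_divisorsAntidiagonal] at hs
          obtain ⟨hkl, ⟨hax, hk⟩, ⟨hby, hl⟩⟩ := hs
          rw [mem_Q]
          have h1 : a ≠ 0 ∧ x ≠ 0 := by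
            constructor <;> rintro rfl <;> simp at hax <;> exact hk hax.symm
          have h2 : b ≠ 0 ∧ y ≠ 0 := by
            constructor <;> rintro rfl <;> simp at hby <;> exact hl hby.symm
          refine ⟨?_, ?_, ?_, ?_, by rw [hax, hby]; exact hkl⟩ 
          · show 0 < a; omega
          · show 0 < x; omega
          · show 0 < b; omega
          · show 0 < y; omega
        · rintro p _; rfl
        · rintro ⟨⟨k,l⟩,⟨a,x⟩,b,y⟩ hs
          simp only [mem_sigma, Finset.HasAntidiagonal.mem_antidiagonal, mem_product, Nat.mem_divisorsAntidiagonal] at hs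
          obtain ⟨hkl, ⟨hax, hk⟩, ⟨hby, hl⟩⟩ := hs
          subst hax; subst hby; rfl
        · rintro p _; rfl
    _ = ∑ kl ∈ antidiagonal n, ∑ q1 ∈ kl.1.divisorsAntidiagonal, ∑ q2 ∈ kl.2.divisorsAntidiagonal,
          (q1.1 : ℚ) * q2.1 := by
        rw [sum_sigma]
        exact sum_congr rfl fun kl _ => by rw [sum_product]
    _ = _ := by
        refine sum_congr rfl fun kl _ => ?_
        rw [hσ, hσ, sum_mul_sum]
/-- Besge's formula assembled via Liouville's bijection. -/
lemma besge (n : ℕ) :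
    ∑ p ∈ Q n, (p.1.1:ℚ) * p.2.1
      = ∑ q ∈ n.divisorsAntidiagonal, (5*(q.1:ℚ)^3 + q.1 - 6*n*q.1) / 12 := by
  -- canonical sums
  set t1 := ∑ p ∈ (Q n).filter (fun p => p.1.2 < p.2.2), (p.1.1:ℚ)^2 with ht1
  set t2 := ∑ p ∈ (Q n).filter (fun p => p.2.1 < p.1.1), (p.1.1:ℚ)^2 with ht2
  set t3 := ∑ p ∈ (Q n).filter (fun p => p.1.2 < p.2.2), (p.2.1:ℚ)^2 with ht3
  set t4 := ∑ p ∈ (Q n).filter (fun p => p.2.1 < p.1.1), (p.2.1:ℚ)^2 with ht4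
  set t5 := ∑ p ∈ (Q n).filter (fun p => p.2.2 < p.1.2), (p.1.1:ℚ)^2 with ht5
  set t6 := ∑ p ∈ (Q n).filter (fun p => p.1.1 < p.2.1), (p.1.1:ℚ)^2 with ht6
  set t7 := ∑ p ∈ (Q n).filter (fun p => p.1.2 = p.2.2), (p.1.1:ℚ)^2 with ht7
  set t8 := ∑ p ∈ (Q n).filter (fun p => p.1.1 = p.2.1), (p.1.1:ℚ)^2 with ht8
  set t9 := ∑ p ∈ (Q n).filter (fun p => p.1.2 = p.2.2), ((p.1.1:ℚ) + p.2.1)^2 with ht9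
  set t10 := ∑ p ∈ (Q n).filter (fun p => p.2.1 < p.1.1), ((p.1.1:ℚ) - p.2.1)^2 with ht10
  set t11 := ∑ p ∈ (Q n).filter (fun p => p.1.1 < p.2.1), ((p.1.1:ℚ) - p.2.1)^2 with ht11
  set t12 := ∑ p ∈ (Q n).filter (fun p => p.1.1 = p.2.1), ((p.1.1:ℚ) - p.2.1)^2 with ht12
  set t13 := ∑ p ∈ (Q n).filter (fun p => p.1.2 < p.2.2), ((p.1.1:ℚ) + p.2.1)^2 with ht13
  set t14 := ∑ p ∈ (Q n).filter (fun p => p.2.2 < p.1.2), ((p.1.1:ℚ) + p.2.1)^2 with ht14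
  -- bijection facts
  have h10 : t10 = t1 := by
    rw [ht10, ← sum_phi n (fun p => ((p.1.1:ℚ) - p.2.1)^2)]
    exact sum_congr rfl fun p _ => by push_cast; ring
  have h13 : t13 = t2 := by
    rw [ht13, ht2, ← sum_phi n (fun p => (p.1.1:ℚ)^2)]
    exact sum_congr rfl fun p _ => by push_cast; ring
  have h34 : t4 = t3 := by
    rw [ht4, ht3, ← sum_phi n (fun p => (p.2.1:ℚ)^2)]
  -- swap facts
  have h11 : t11 = t10 := by
    rw [ht11, sum_swap' n (fun p => p.1.1 < p.2.1) (fun p => ((p.1.1:ℚ) - p.2.1)^2)]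
    exact sum_congr rfl fun p _ => by ring
  have h14 : t14 = t13 := by
    rw [ht14, sum_swap' n (fun p => p.2.2 < p.1.2) (fun p => ((p.1.1:ℚ) + p.2.1)^2)]
    exact sum_congr rfl fun p _ => by ring
  have h53 : t5 = t3 := by
    rw [ht5, sum_swap' n (fun p => p.2.2 < p.1.2) (fun p => (p.1.1:ℚ)^2)]
  have h64 : t6 = t4 := by
    rw [ht6, sum_swap' n (fun p => p.1.1 < p.2.1) (fun p => (p.1.1:ℚ)^2)]
  -- diagonal vanishing
  have h12 : t12 = 0 := by
    rw [ht12]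
    refine sum_eq_zero fun p hp => ?_
    rw [mem_filter] at hp
    rw [hp.2]
    ring
  -- trichotomies
  have trx : ∑ p ∈ Q n, (p.1.1:ℚ)^2 = t1 + t5 + t7 :=
    sum_trichotomy (Q n) (fun p => p.1.2) (fun p => p.2.2) _
  have tra : ∑ p ∈ Q n, (p.1.1:ℚ)^2 = t6 + t2 + t8 :=
    sum_trichotomy (Q n) (fun p => p.1.1) (fun p => p.2.1) _
  have trm : ∑ p ∈ Q n, ((p.1.1:ℚ) - p.2.1)^2 = t11 + t10 + t12 :=
    sum_trichotomy (Q n) (fun p => p.1.1) (fun p => p.2.1) _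
  have trp : ∑ p ∈ Q n, ((p.1.1:ℚ) + p.2.1)^2 = t13 + t14 + t9 :=
    sum_trichotomy (Q n) (fun p => p.1.2) (fun p => p.2.2) _
  -- pointwise expansion
  have hpt : ∑ p ∈ Q n, ((p.1.1:ℚ) - p.2.1)^2
      = ∑ p ∈ Q n, ((p.1.1:ℚ) + p.2.1)^2 - 4 * ∑ p ∈ Q n, (p.1.1:ℚ) * p.2.1 := by
    rw [mul_sum, ← sum_sub_distrib]
    exact sum_congr rfl fun p _ => by ring
  -- evaluate the three diagonal sums
  have e7 : t7 = ∑ q ∈ n.divisorsAntidiagonal, (q.1:ℚ)*((q.1:ℚ)-1)*(2*(q.1:ℚ)-1)/6 := by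
    rw [ht7, sum_diag_xy n (fun p => (p.1.1:ℚ)^2)]
    exact sum_congr rfl fun q _ => sum_Ico_sq q.1
  have e8 : t8 = ∑ q ∈ n.divisorsAntidiagonal, ((q.2:ℚ)-1)*(q.1:ℚ)^2 := by
    rw [ht8, sum_diag_ab n (fun p => (p.1.1:ℚ)^2)]
    refine sum_congr rfl fun q hq => ?_
    rw [Nat.mem_divisorsAntidiagonal] at hq
    have hd : 1 ≤ q.2 := by
      rcases Nat.eq_zero_or_pos q.2 with h | h
      · exfalso; apply hq.2; rw [← hq.1, h, Nat.mul_zero]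
      · exact h
    calc ∑ x ∈ Ico 1 q.2, ((((q.1, x), (q.1, q.2 - x)) : (ℕ×ℕ)×(ℕ×ℕ)).1.1:ℚ)^2
        = ∑ _x ∈ Ico 1 q.2, (q.1:ℚ)^2 := sum_congr rfl fun x _ => rfl
      _ = ((q.2:ℚ)-1)*(q.1:ℚ)^2 := sum_Ico_const q.2 hd _
  have e9 : t9 = ∑ q ∈ n.divisorsAntidiagonal, ((q.1:ℚ)-1)*(q.1:ℚ)^2 := by
    rw [ht9, sum_diag_xy n (fun p => ((p.1.1:ℚ) + p.2.1)^2)]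
    refine sum_congr rfl fun q hq => ?_
    rw [Nat.mem_divisorsAntidiagonal] at hq
    have hd : 1 ≤ q.1 := by
      rcases Nat.eq_zero_or_pos q.1 with h | h
      · exfalso; apply hq.2; rw [← hq.1, h, Nat.zero_mul]
      · exact h
    calc ∑ a ∈ Ico 1 q.1, ((a:ℚ) + ((q.1 - a : ℕ):ℚ))^2
        = ∑ _a ∈ Ico 1 q.1, (q.1:ℚ)^2 := by
          refine sum_congr rfl fun a ha => ?_
          rw [mem_Ico] at ha
          rw [Nat.cast_sub (le_of_lt ha.2)]
          ring
      _ = ((q.1:ℚ)-1)*(q.1:ℚ)^2 := sum_Ico_const q.1 hd _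
  -- combine linearly:  -4S = 2(t8 - t7) - t9
  have hS : ∑ p ∈ Q n, (p.1.1:ℚ) * p.2.1 = (2*t7 + t9 - 2*t8)/4 := by
    have key : t1 - t2 = t8 - t7 := by linarith
    linarith [hpt, trm, trp]
  rw [hS, e7, e8, e9, mul_sum, mul_sum, ← sum_add_distrib, ← sum_sub_distrib, sum_div]
  refine sum_congr rfl fun q hq => ?_
  rw [Nat.mem_divisorsAntidiagonal] at hq
  have hq1 : (q.1:ℚ) * q.2 = n := by exact_mod_cast congrArg (Nat.cast : ℕ → ℚ) hq.1
  linear_combination (-(q.1:ℚ)/2) * hq1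

end S12

/-- `G₂ = −1/24 + Σ σ₁(n) qⁿ`. -/
noncomputable def stmt12G2 : PowerSeries ℚ :=
  PowerSeries.mk fun n => if n = 0 then -1 / 24 else (ArithmeticFunction.sigma 1 n : ℚ)

/-- `G₄ = 1/240 + Σ σ₃(n) qⁿ`. -/
noncomputable def stmt12G4 : PowerSeries ℚ :=
  PowerSeries.mk fun n => if n = 0 then 1 / 240 else (ArithmeticFunction.sigma 3 n : ℚ)

/-- The Ramanujan identity `q·(d/dq)G₂ = (5/6)G₄ − 2G₂²` in `ℚ[[q]]`;
in particular `B₀ = −2G₂² + (5/6)G₄` equals `q·(d/dq)G₂`. -/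
theorem stmt_12 :
    PowerSeries.mk (fun n => (n : ℚ) * PowerSeries.coeff (R := ℚ) n stmt12G2) =
      PowerSeries.C (R := ℚ) (5 / 6) * stmt12G4 - 2 * stmt12G2 ^ 2 := by
  have h2 : (2 : PowerSeries ℚ) * stmt12G2 ^ 2 = stmt12G2 * stmt12G2 + stmt12G2 * stmt12G2 := by
    rw [two_mul, pow_two]
  have hc : ∀ k, PowerSeries.coeff (R := ℚ) k stmt12G2
      = (ArithmeticFunction.sigma 1 k : ℚ) + (if k = 0 then (-1/24 : ℚ) else 0) := by
    intro k
    rw [stmt12G2, PowerSeries.coeff_mk]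
    rcases eq_or_ne k 0 with rfl | hk
    · simp
    · simp [hk]
  ext n
  rw [PowerSeries.coeff_mk, map_sub, PowerSeries.coeff_C_mul, h2, map_add, PowerSeries.coeff_mul]
  rcases Nat.eq_zero_or_pos n with rfl | hn
  · simp [stmt12G2, stmt12G4, PowerSeries.coeff_mk]
    norm_num
  have hn' : n ≠ 0 := hn.ne'
  have hG4 : PowerSeries.coeff (R := ℚ) n stmt12G4 = (ArithmeticFunction.sigma 3 n : ℚ) := by
    rw [stmt12G4, PowerSeries.coeff_mk, if_neg hn']
  -- expand the convolution square
  have hA : ∑ kl ∈ Finset.HasAntidiagonal.antidiagonal n,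
      (if kl.1 = 0 then (-1/24 : ℚ) else 0) * (ArithmeticFunction.sigma 1 kl.2 : ℚ)
      = (-1/24) * (ArithmeticFunction.sigma 1 n : ℚ) := by
    have hmem : ((0 : ℕ), n) ∈ Finset.HasAntidiagonal.antidiagonal n := by
      simp [Finset.HasAntidiagonal.mem_antidiagonal]
    refine Finset.sum_eq_single ((0 : ℕ), n) (fun b hb hbne => ?_) (fun h => absurd hmem h)
    · rw [Finset.HasAntidiagonal.mem_antidiagonal] at hb
      have : b.1 ≠ 0 := by
        rintro h0
        apply hbne
        have : b.2 = n := by omega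
        exact Prod.ext h0 this
      rw [if_neg this, zero_mul]
  have hB : ∑ kl ∈ Finset.HasAntidiagonal.antidiagonal n,
      (ArithmeticFunction.sigma 1 kl.1 : ℚ) * (if kl.2 = 0 then (-1/24 : ℚ) else 0)
      = (ArithmeticFunction.sigma 1 n : ℚ) * (-1/24) := by
    have hmem : (n, (0 : ℕ)) ∈ Finset.HasAntidiagonal.antidiagonal n := by
      simp [Finset.HasAntidiagonal.mem_antidiagonal]
    refine Finset.sum_eq_single (n, (0 : ℕ)) (fun b hb hbne => ?_) (fun h => absurd hmem h)
    · rw [Finset.HasAntidiagonal.mem_antidiagonal] at hb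
      have : b.2 ≠ 0 := by
        rintro h0
        apply hbne
        have : b.1 = n := by omega
        exact Prod.ext this h0
      rw [if_neg this, mul_zero]
  have hC : ∑ kl ∈ Finset.HasAntidiagonal.antidiagonal n,
      (if kl.1 = 0 then (-1/24 : ℚ) else 0) * (if kl.2 = 0 then (-1/24 : ℚ) else 0) = 0 := by
    refine Finset.sum_eq_zero fun kl hkl => ?_
    rw [Finset.HasAntidiagonal.mem_antidiagonal] at hkl
    rcases eq_or_ne kl.1 0 with h1 | h1
    · rw [if_neg (show kl.2 ≠ 0 by omega), mul_zero]
    · rw [if_neg h1, zero_mul]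
  have hexp : ∑ kl ∈ Finset.HasAntidiagonal.antidiagonal n,
      (PowerSeries.coeff (R := ℚ) kl.1 stmt12G2) * (PowerSeries.coeff (R := ℚ) kl.2 stmt12G2)
      = (∑ kl ∈ Finset.HasAntidiagonal.antidiagonal n,
          (ArithmeticFunction.sigma 1 kl.1 : ℚ) * (ArithmeticFunction.sigma 1 kl.2 : ℚ))
        - (1/12) * (ArithmeticFunction.sigma 1 n : ℚ) := by
    calc ∑ kl ∈ Finset.HasAntidiagonal.antidiagonal n,
        (PowerSeries.coeff (R := ℚ) kl.1 stmt12G2) * (PowerSeries.coeff (R := ℚ) kl.2 stmt12G2)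
        = ∑ kl ∈ Finset.HasAntidiagonal.antidiagonal n,
            ((ArithmeticFunction.sigma 1 kl.1 : ℚ) * (ArithmeticFunction.sigma 1 kl.2 : ℚ)
              + (if kl.1 = 0 then (-1/24 : ℚ) else 0) * (ArithmeticFunction.sigma 1 kl.2 : ℚ)
              + (ArithmeticFunction.sigma 1 kl.1 : ℚ) * (if kl.2 = 0 then (-1/24 : ℚ) else 0)
              + (if kl.1 = 0 then (-1/24 : ℚ) else 0) * (if kl.2 = 0 then (-1/24 : ℚ) else 0)) := by
          refine Finset.sum_congr rfl fun kl _ => ?_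
          rw [hc kl.1, hc kl.2]
          ring
      _ = _ := by
          simp only [Finset.sum_add_distrib]
          rw [hA, hB, hC]
          ring
  rw [hexp, ← S12.sum_conv n, S12.besge n, hc n, if_neg hn', hG4]
  have hbes : ∑ q ∈ n.divisorsAntidiagonal, (5*(q.1:ℚ)^3 + q.1 - 6*n*q.1) / 12
      = ∑ d ∈ n.divisors, (5*(d:ℚ)^3 + d - 6*n*d) / 12 :=
    Nat.sum_divisorsAntidiagonal (fun a _ => (5*(a:ℚ)^3 + a - 6*(n:ℚ)*a) / 12)
  have hs1 : ((ArithmeticFunction.sigma 1 n : ℕ) : ℚ) = ∑ d ∈ n.divisors, (d:ℚ) := by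
    rw [ArithmeticFunction.sigma_one_apply]; push_cast; rfl
  have hs3 : ((ArithmeticFunction.sigma 3 n : ℕ) : ℚ) = ∑ d ∈ n.divisors, (d:ℚ)^3 := by
    rw [ArithmeticFunction.sigma_apply]; push_cast; rfl
  rw [hbes, hs1, hs3, add_zero]
  simp only [Finset.mul_sum]
  simp only [← Finset.sum_sub_distrib, ← Finset.sum_add_distrib, ← Finset.sum_sub_distrib]
  refine Finset.sum_congr rfl fun d _ => ?_
  ring
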